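/- Let V and Q be real Hilbert spaces, a : V × V → ℝ a continuous coercive symmetric bilinear form on the kernel Z = {v ∈ V : b(v,q)=0 ∀q ∈ Q}, and b : V × Q → ℝ continuous and satisfying the inf-sup condition: there exists β > 0 with sup_{v∈V, v≠0} b(v,q)/‖v‖_V ≥ β ‖q‖_Q for all q ∈ Q. Then for every f ∈ V' the saddle point problem: find (u,p) ∈ V × Q with a(u,v) + b(v,p) = f(v) ∀v ∈ V and b(u,q) = 0 ∀q ∈ Q, has a unique solution, and ‖u‖_V + ‖p‖_Q ≤ C ‖f‖_{V'} with C depending only on the coercivity, continuity, and inf-sup constants. -/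

import Mathlib

open MeasureTheory Metric Set

noncomputable section

/-- Points of the plane. -/
abbrev Pt : Type := ℝ × ℝ

/-- Evaluation of a bivariate polynomial at a point of the plane. -/
def pev (p : MvPolynomial (Fin 2) ℝ) (x : Pt) : ℝ :=
  MvPolynomial.eval (fun i => if i = 0 then x.1 else x.2) p

/-- Affine parametrization of the segment from `a` to `b`. -/
def ept (a b : Pt) (t : ℝ) : Pt := a + t • (b - a)

/-- Unit normal to the (nondegenerate) segment from `a` to `b`. -/
def unitNormal (a b : Pt) : Pt := ‖b - a‖⁻¹ • (b.2 - a.2, a.1 - b.1)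

/-- Euclidean inner product of the gradients of `f` and `g` at `x`. -/
def gradDot (f g : Pt → ℝ) (x : Pt) : ℝ :=
  fderiv ℝ f x (1, 0) * fderiv ℝ g x (1, 0) + fderiv ℝ f x (0, 1) * fderiv ℝ g x (0, 1)

/-- Pointwise Laplacian of `v` at `x`. -/
def lapl (v : Pt → ℝ) (x : Pt) : ℝ :=
  fderiv ℝ (fun y => fderiv ℝ v y (1, 0)) x (1, 0) +
  fderiv ℝ (fun y => fderiv ℝ v y (0, 1)) x (0, 1)

/-- `E` is an (open, bounded, nonempty) polygon whose boundary is the union of the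
given nondegenerate edges. -/
def IsPolygon (E : Set Pt) (edges : Finset (Pt × Pt)) : Prop :=
  IsOpen E ∧ Bornology.IsBounded E ∧ E.Nonempty ∧
    (∀ e ∈ edges, e.1 ≠ e.2) ∧ frontier E = ⋃ e ∈ edges, segment ℝ e.1 e.2

/-- `E` is star-shaped with respect to the ball of radius `r` centered at `x₀`. -/
def StarShapedWrt (E : Set Pt) (x₀ : Pt) (r : ℝ) : Prop :=
  ball x₀ r ⊆ E ∧ ∀ y ∈ ball x₀ r, ∀ x ∈ E, segment ℝ y x ⊆ E

/-- The local nonconforming virtual element space of order `k` on the polygon `E`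
with the given edges: functions in `H¹(E)` whose Laplacian is a polynomial of degree
`≤ k-2` and whose outward normal derivative on each edge is a polynomial of degree
`≤ k-1` (in the edge parametrization). -/
def VEk (k : ℕ) (E : Set Pt) (edges : Finset (Pt × Pt)) : Set (Pt → ℝ) :=
  {v | ContinuousOn v (closure E) ∧ DifferentiableOn ℝ v E ∧
    (∃ g : MvPolynomial (Fin 2) ℝ, (g.totalDegree : ℤ) ≤ (k : ℤ) - 2 ∧
      ∀ x ∈ E, lapl v x = pev g x) ∧
    (∀ e ∈ edges, ∃ q : Polynomial ℝ, (q.natDegree : ℤ) ≤ (k : ℤ) - 1 ∧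
      ∀ t ∈ Icc (0:ℝ) 1, fderiv ℝ v (ept e.1 e.2 t) (unitNormal e.1 e.2) = q.eval t)}


section BrezziAux

open RealInnerProductSpace

variable {V Q : Type*}
    [NormedAddCommGroup V] [InnerProductSpace ℝ V] [CompleteSpace V]
    [NormedAddCommGroup Q] [InnerProductSpace ℝ Q] [CompleteSpace Q]

/-- The Riesz representative operator of the bilinear form `b` in its second slot. -/
noncomputable def Dop (b : V →L[ℝ] Q →L[ℝ] ℝ) : Q →L[ℝ] V :=
  LinearMap.mkContinuous
    { toFun := fun q => (InnerProductSpace.toDual ℝ V).symm (b.flip q)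
      map_add' := fun q r => by simp
      map_smul' := fun r q => by simp }
    ‖b.flip‖ (fun q => by
      simp only [LinearMap.coe_mk, AddHom.coe_mk, LinearIsometryEquiv.norm_map]
      exact (b.flip).le_opNorm q)

set_option linter.unusedSectionVars false in
theorem Dop_inner (b : V →L[ℝ] Q →L[ℝ] ℝ) (q : Q) (v : V) : ⟪Dop b q, v⟫ = b v q := by
  simp [Dop, InnerProductSpace.toDual_symm_apply]

end BrezziAux

open RealInnerProductSpace

set_option maxHeartbeats 1000000

/-- Brezzi theorem: the saddle point problem with a form `a` coercive on
the kernel of `b` and `b` satisfying the inf-sup condition has a unique solution,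
depending continuously on the datum `f`. -/
theorem stmt5 {V Q : Type*}
    [NormedAddCommGroup V] [InnerProductSpace ℝ V] [CompleteSpace V]
    [NormedAddCommGroup Q] [InnerProductSpace ℝ Q] [CompleteSpace Q]
    (a : V →L[ℝ] V →L[ℝ] ℝ) (b : V →L[ℝ] Q →L[ℝ] ℝ)
    (hasym : ∀ u v, a u v = a v u)
    (α : ℝ) (hα : 0 < α)
    (hcoer : ∀ v : V, (∀ q : Q, b v q = 0) → α * ‖v‖ ^ 2 ≤ a v v)
    (β : ℝ) (hβ : 0 < β)
    (hinfsup : ∀ q : Q, ∀ ε > 0, ∃ v : V, v ≠ 0 ∧ (β - ε) * ‖q‖ * ‖v‖ ≤ b v q) :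
    ∃ C > 0, ∀ f : V →L[ℝ] ℝ,
      (∃! up : V × Q, (∀ v, a up.1 v + b v up.2 = f v) ∧ (∀ q, b up.1 q = 0)) ∧
      ∀ up : V × Q, ((∀ v, a up.1 v + b v up.2 = f v) ∧ (∀ q, b up.1 q = 0)) →
        ‖up.1‖ + ‖up.2‖ ≤ C * ‖f‖ := by
  classical
  set D := Dop b with hDdef
  have hD : ∀ q v, ⟪D q, v⟫ = b v q := Dop_inner b
  -- lower bound for D from the inf-sup condition
  have hDlow : ∀ q : Q, β * ‖q‖ ≤ ‖D q‖ := by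
    intro q
    rcases eq_or_ne q 0 with rfl | hq
    · simp
    have hq' : (0:ℝ) < ‖q‖ := norm_pos_iff.mpr hq
    refine le_of_forall_pos_le_add fun δ hδ => ?_
    obtain ⟨v, hv0, hvle⟩ := hinfsup q (δ / ‖q‖) (div_pos hδ hq')
    have hv' : (0:ℝ) < ‖v‖ := norm_pos_iff.mpr hv0
    have h1 : b v q ≤ ‖D q‖ * ‖v‖ := by
      rw [← hD q v]; exact real_inner_le_norm _ _
    have h2 : (β - δ / ‖q‖) * ‖q‖ * ‖v‖ ≤ ‖D q‖ * ‖v‖ := hvle.trans h1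
    have h3 : (β - δ / ‖q‖) * ‖q‖ ≤ ‖D q‖ := le_of_mul_le_mul_right h2 hv'
    have h4 : (β - δ / ‖q‖) * ‖q‖ = β * ‖q‖ - δ := by field_simp
    linarith
  -- the kernel Z of b
  set Z : Submodule ℝ V := (LinearMap.range (D : Q →ₗ[ℝ] V))ᗮ with hZdef
  have hZmem : ∀ v : V, v ∈ Z ↔ ∀ q : Q, b v q = 0 := by
    intro v
    rw [hZdef, Submodule.mem_orthogonal]
    constructor
    · intro hv q; rw [← hD q v]; exact hv (D q) (LinearMap.mem_range_self (D : Q →ₗ[ℝ] V) q)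
    · rintro hv w ⟨q, rfl⟩; rw [ContinuousLinearMap.coe_coe, hD q v]; exact hv q
  -- range of D is closed, hence Zᗮ = range D
  have hclosed : IsClosed ((LinearMap.range (D : Q →ₗ[ℝ] V) : Submodule ℝ V) : Set V) := by
    have hanti : AntilipschitzWith (Real.toNNReal β⁻¹) D := by
      apply ContinuousLinearMap.antilipschitz_of_bound
      intro q
      rw [Real.coe_toNNReal _ (inv_pos.mpr hβ).le]
      have h := hDlow q
      have he : ‖q‖ = β⁻¹ * (β * ‖q‖) := by field_simp
      rw [he]
      exact mul_le_mul_of_nonneg_left h (inv_pos.mpr hβ).le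
    have h := hanti.isClosed_range D.uniformContinuous
    simpa [LinearMap.coe_range] using h
  have hZorth : Zᗮ = LinearMap.range (D : Q →ₗ[ℝ] V) := by
    haveI : CompleteSpace (LinearMap.range (D : Q →ₗ[ℝ] V)) := hclosed.completeSpace_coe
    exact (LinearMap.range (D : Q →ₗ[ℝ] V)).orthogonal_orthogonal
  -- Lax–Milgram on Z
  haveI : CompleteSpace Z := (Submodule.isClosed_orthogonal _).completeSpace_coe
  let ι : Z →L[ℝ] V := Z.subtypeL
  let aZ : Z →L[ℝ] Z →L[ℝ] ℝ := (((a.comp ι).flip.comp ι)).flip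
  have haZ : ∀ u v : Z, aZ u v = a (↑u) (↑v) := fun u v => rfl
  have hcoerZ : IsCoercive aZ := by
    refine ⟨α, hα, fun u => ?_⟩
    have h1 : ∀ q, b (↑u) q = 0 := (hZmem ↑u).mp u.2
    have h2 := hcoer ↑u h1
    have hnu : ‖u‖ = ‖(↑u : V)‖ := rfl
    rw [haZ, hnu]
    nlinarith [h2]
  let e := hcoerZ.continuousLinearEquivOfBilin
  refine ⟨α⁻¹ + β⁻¹ * (1 + ‖a‖ * α⁻¹), by positivity, fun f => ?_⟩
  -- the a priori bound, for an arbitrary datum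
  have hbound : ∀ (f' : V →L[ℝ] ℝ) (up : V × Q),
      ((∀ v, a up.1 v + b v up.2 = f' v) ∧ (∀ q, b up.1 q = 0)) →
      ‖up.1‖ + ‖up.2‖ ≤ (α⁻¹ + β⁻¹ * (1 + ‖a‖ * α⁻¹)) * ‖f'‖ := by
    rintro f' ⟨u, p⟩ ⟨h1, h2⟩
    have hu : ‖u‖ ≤ α⁻¹ * ‖f'‖ := by
      have hzz : α * ‖u‖ ^ 2 ≤ a u u := hcoer u h2
      have hfu : a u u = f' u := by have h := h1 u; rw [h2 p] at h; linarith
      have hfu2 : f' u ≤ ‖f'‖ * ‖u‖ :=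
        le_trans (le_abs_self _) (by rw [← Real.norm_eq_abs]; exact f'.le_opNorm u)
      rcases eq_or_lt_of_le (norm_nonneg u) with h0 | h0
      · rw [← h0]; positivity
      · have hlin : α * ‖u‖ ≤ ‖f'‖ := by nlinarith
        have he : ‖u‖ = α⁻¹ * (α * ‖u‖) := by field_simp
        rw [he]
        exact mul_le_mul_of_nonneg_left hlin (inv_pos.mpr hα).le
    have hDp : D p = (InnerProductSpace.toDual ℝ V).symm f'
        - (InnerProductSpace.toDual ℝ V).symm (a u) := by
      have hz : ∀ v : V, ⟪D p - ((InnerProductSpace.toDual ℝ V).symm f'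
          - (InnerProductSpace.toDual ℝ V).symm (a u)), v⟫ = 0 := by
        intro v
        rw [inner_sub_left, inner_sub_left, hD, InnerProductSpace.toDual_symm_apply,
          InnerProductSpace.toDual_symm_apply]
        have h := h1 v
        linarith
      exact sub_eq_zero.mp (inner_self_eq_zero.mp (hz _))
    have hp : β * ‖p‖ ≤ ‖f'‖ + ‖a‖ * (α⁻¹ * ‖f'‖) := by
      have h5 := hDlow p
      rw [hDp] at h5
      have h6 : ‖(InnerProductSpace.toDual ℝ V).symm f'
          - (InnerProductSpace.toDual ℝ V).symm (a u)‖ ≤ ‖f'‖ + ‖a u‖ := by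
        refine (norm_sub_le _ _).trans ?_
        rw [LinearIsometryEquiv.norm_map, LinearIsometryEquiv.norm_map]
      have h7 : ‖a u‖ ≤ ‖a‖ * ‖u‖ := a.le_opNorm u
      have h8 : ‖a‖ * ‖u‖ ≤ ‖a‖ * (α⁻¹ * ‖f'‖) :=
        mul_le_mul_of_nonneg_left hu (norm_nonneg a)
      linarith
    have hp2 : ‖p‖ ≤ β⁻¹ * ((1 + ‖a‖ * α⁻¹) * ‖f'‖) := by
      have he : ‖p‖ = β⁻¹ * (β * ‖p‖) := by field_simp
      rw [he]
      refine mul_le_mul_of_nonneg_left ?_ (inv_pos.mpr hβ).le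
      nlinarith [hp]
    calc ‖u‖ + ‖p‖ ≤ α⁻¹ * ‖f'‖ + β⁻¹ * ((1 + ‖a‖ * α⁻¹) * ‖f'‖) := add_le_add hu hp2
      _ = (α⁻¹ + β⁻¹ * (1 + ‖a‖ * α⁻¹)) * ‖f'‖ := by ring
  -- existence
  let fZ : Z →L[ℝ] ℝ := f.comp ι
  let u0 : Z := e.symm ((InnerProductSpace.toDual ℝ Z).symm fZ)
  have hu0 : ∀ z : Z, a (↑u0) (↑z) = f ↑z := by
    intro z
    have h2 : (⟪(InnerProductSpace.toDual ℝ Z).symm fZ, z⟫ : ℝ) = aZ u0 z := by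
      calc (⟪(InnerProductSpace.toDual ℝ Z).symm fZ, z⟫ : ℝ)
          = ⟪e u0, z⟫ := by rw [show e u0 = (InnerProductSpace.toDual ℝ Z).symm fZ from
            e.apply_symm_apply _]
        _ = aZ u0 z := hcoerZ.continuousLinearEquivOfBilin_apply u0 z
    rw [InnerProductSpace.toDual_symm_apply] at h2
    exact h2.symm
  set g : V := (InnerProductSpace.toDual ℝ V).symm f
      - (InnerProductSpace.toDual ℝ V).symm (a ↑u0) with hgdef
  have hg : g ∈ Zᗮ := by
    rw [Submodule.mem_orthogonal]
    intro z hz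
    rw [hgdef, real_inner_comm, inner_sub_left,
      InnerProductSpace.toDual_symm_apply, InnerProductSpace.toDual_symm_apply]
    have h := hu0 ⟨z, hz⟩
    simp only [Submodule.coe_mk] at h
    linarith
  rw [hZorth] at hg
  obtain ⟨p0, hp0⟩ := hg
  have hsol : (∀ v, a (↑u0 : V) v + b v p0 = f v) ∧ (∀ q, b (↑u0 : V) q = 0) := by
    constructor
    · intro v
      have hb : b v p0 = ⟪D p0, v⟫ := (hD p0 v).symm
      rw [hb, show D p0 = g from hp0, hgdef, inner_sub_left, InnerProductSpace.toDual_symm_apply,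
        InnerProductSpace.toDual_symm_apply]
      ring
    · exact (hZmem ↑u0).mp u0.2
  refine ⟨⟨((↑u0 : V), p0), hsol, ?_⟩, hbound f⟩
  rintro ⟨u', p'⟩ ⟨h1', h2'⟩
  have hdiff : (∀ v, a (u' - ↑u0) v + b v (p' - p0) = (0 : V →L[ℝ] ℝ) v) ∧
      (∀ q, b (u' - ↑u0) q = 0) := by
    constructor
    · intro v
      have ha' := h1' v
      have hb' := hsol.1 v
      simp only [map_sub, ContinuousLinearMap.sub_apply, ContinuousLinearMap.zero_apply]
      linarith
    · intro q
      have ha' := h2' q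
      have hb' := hsol.2 q
      simp only [map_sub, ContinuousLinearMap.sub_apply]
      linarith
  have hbd := hbound 0 (u' - ↑u0, p' - p0) hdiff
  simp only [norm_zero, mul_zero] at hbd
  have h1n : u' - (↑u0 : V) = 0 := by
    rw [← norm_eq_zero]
    have := norm_nonneg (u' - (↑u0 : V))
    have := norm_nonneg (p' - p0)
    linarith
  have h2n : p' - p0 = 0 := by
    rw [← norm_eq_zero]
    have := norm_nonneg (u' - (↑u0 : V))
    have := norm_nonneg (p' - p0)
    linarith
  rw [Prod.mk.injEq]
  exact ⟨sub_eq_zero.mp h1n, sub_eq_zero.mp h2n⟩
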